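/- Let L', M', N', P', s, t be real numbers with L' > 0, M' > 0, P' > 0, N' > P', and sin(s − t) ≠ 0, and define γ₁(x) = (L' + M'·cos(s + x)) / (N' + P'·cos(t + x)). If the derivative of γ₁ at a real point x equals zero, then sin(t + x) ≠ 0 and γ₁(x) = L'/N' − M'·sin(s − t)/(N'·sin(t + x)). -/

import Mathlib

/-- For `L' > 0, M' > 0, P' > 0, N' > P'`, `sin(s − t) ≠ 0`, and
`γ₁(x) = (L' + M'·cos(s + x)) / (N' + P'·cos(t + x))`, if `deriv γ₁ x = 0` then
`sin(t + x) ≠ 0` and `γ₁(x) = L'/N' − M'·sin(s − t)/(N'·sin(t + x))`. -/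
theorem stmt_3 (L' M' N' P' s t : ℝ) (hL : L' > 0) (hM : M' > 0) (hP : P' > 0)
    (hNP : N' > P') (hst : Real.sin (s - t) ≠ 0)
    (γ₁ : ℝ → ℝ)
    (hγ : γ₁ = fun x => (L' + M' * Real.cos (s + x)) / (N' + P' * Real.cos (t + x)))
    (x : ℝ) (hx : deriv γ₁ x = 0) :
    Real.sin (t + x) ≠ 0 ∧
      γ₁ x = L' / N' - M' * Real.sin (s - t) / (N' * Real.sin (t + x)) := by
  subst hγ
  have hv : ∀ y : ℝ, 0 < N' + P' * Real.cos (t + y) := by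
    intro y
    nlinarith [Real.neg_one_le_cos (t + y)]
  have h1 : HasDerivAt (fun x => L' + M' * Real.cos (s + x)) (-(M' * Real.sin (s + x))) x := by
    have := (((hasDerivAt_id x).const_add s).cos.const_mul M').const_add L'
    simpa using this
  have h2 : HasDerivAt (fun x => N' + P' * Real.cos (t + x)) (-(P' * Real.sin (t + x))) x := by
    have := (((hasDerivAt_id x).const_add t).cos.const_mul P').const_add N'
    simpa using this
  have hd : HasDerivAt (fun x => (L' + M' * Real.cos (s + x)) / (N' + P' * Real.cos (t + x))) _ x :=
    h1.div h2 (ne_of_gt (hv x))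
  rw [hd.deriv] at hx
  have hvx := hv x
  have key : -(M' * Real.sin (s + x)) * (N' + P' * Real.cos (t + x)) -
      (L' + M' * Real.cos (s + x)) * -(P' * Real.sin (t + x)) = 0 := by
    have h2 : ((N' + P' * Real.cos (t + x)) ^ 2) ≠ 0 := by positivity
    field_simp at hx
    linarith
  have hsst : Real.sin (s - t) = Real.sin (s + x) * Real.cos (t + x)
      - Real.cos (s + x) * Real.sin (t + x) := by
    rw [show s - t = (s + x) - (t + x) by ring, Real.sin_sub]
  have hsin : Real.sin (t + x) ≠ 0 := by
    intro h
    have hs : Real.sin (s + x) = 0 := by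
      rw [h] at key
      have h0 : M' * Real.sin (s + x) * (N' + P' * Real.cos (t + x)) = 0 := by linarith
      rcases mul_eq_zero.mp h0 with h1 | h1
      · rcases mul_eq_zero.mp h1 with h2 | h2
        · exact absurd h2 (ne_of_gt hM)
        · exact h2
      · exact absurd h1 (ne_of_gt hvx)
    apply hst
    rw [hsst, hs, h]
    ring
  refine ⟨hsin, ?_⟩
  have hN : N' ≠ 0 := by linarith
  have goal_eq : (L' + M' * Real.cos (s + x)) * (N' * Real.sin (t + x)) =
      (L' * Real.sin (t + x) - M' * Real.sin (s - t)) * (N' + P' * Real.cos (t + x)) := by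
    rw [hsst]
    linear_combination (-Real.cos (t + x)) * key
  have hrhs : L' / N' - M' * Real.sin (s - t) / (N' * Real.sin (t + x)) =
      (L' * Real.sin (t + x) - M' * Real.sin (s - t)) / (N' * Real.sin (t + x)) := by
    field_simp
  rw [hrhs, div_eq_div_iff (ne_of_gt hvx) (mul_ne_zero hN hsin)]
  linear_combination goal_eq
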